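/- arXiv:1510.02944 — 3 statements merged into one kernel-verified Lean document; each statement's English description precedes it below -/
import Mathlib

section
/- Let λ be a partition all of whose parts are even. Then the Newell–Littlewood coefficient N^λ_{λλ} is at least 1. (This is the combinatorial content of the proposition that the representation ⊗³ detects the subgroup 𝕊_{∥λ∥}(G) of GL_N for G of type B_n, C_n, or D_{2n} when all parts of λ are even.) -/
/-- A partition: a weakly decreasing finite sequence (list) of positive
integers. -/
def IsPartition (l : List ℕ) : Prop :=
  l.Pairwise (· ≥ ·) ∧ ∀ x ∈ l, 0 < x

/-- The `i`-th part (0-indexed) of a partition, `0` beyond its length. -/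
def part (l : List ℕ) (i : ℕ) : ℕ := l.getD i 0

/-- Cell `(i, j)` (row `i`, column `j`, both 0-indexed) lies in the skew
Young diagram `ν/λ`. -/
def InSkew (nu lam : List ℕ) (i j : ℕ) : Prop :=
  part lam i ≤ j ∧ j < part nu i

/-- Cell `(i, j)` comes weakly before cell `(r, c)` in the reverse reading
order: rows are read top to bottom, and each row is read right to left. -/
def ReadingLE (i j r c : ℕ) : Prop := i < r ∨ (i = r ∧ c ≤ j)

/-- `T` is a Littlewood–Richardson tableau of shape `ν/λ` and content `μ`:
`λ ⊆ ν`, the entries of `T` are positive exactly on the cells of the skew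
diagram `ν/λ`, entries weakly increase from left to right along rows,
entries strictly increase from top to bottom down columns, for every `j ≥ 1`
the entry `j` occurs exactly `μ_j` times, and the reverse reading word is a
lattice word: every prefix contains at least as many occurrences of `j` as
of `j + 1`, for every `j ≥ 1`. -/
structure IsLRTableau (nu lam mu : List ℕ) (T : ℕ → ℕ → ℕ) : Prop where
  subset : ∀ i, part lam i ≤ part nu i
  support : ∀ i j, 0 < T i j ↔ InSkew nu lam i j
  row_weak : ∀ i j j', InSkew nu lam i j → InSkew nu lam i j' → j ≤ j' →
    T i j ≤ T i j'
  col_strict : ∀ i i' j, InSkew nu lam i j → InSkew nu lam i' j → i < i' →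
    T i j < T i' j
  content : ∀ k : ℕ, {p : ℕ × ℕ | T p.1 p.2 = k + 1}.ncard = part mu k
  lattice : ∀ r c k : ℕ,
    {p : ℕ × ℕ | T p.1 p.2 = k + 2 ∧ ReadingLE p.1 p.2 r c}.ncard ≤
    {p : ℕ × ℕ | T p.1 p.2 = k + 1 ∧ ReadingLE p.1 p.2 r c}.ncard

/-- The Littlewood–Richardson coefficient `c^ν_{λμ}`: the number of
Littlewood–Richardson tableaux of shape `ν/λ` and content `μ`. -/
noncomputable def lrCoeff (nu lam mu : List ℕ) : ℕ :=
  {T : ℕ → ℕ → ℕ | IsLRTableau nu lam mu T}.ncard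

-- basic part lemmas
lemma part_le_sum (l : List ℕ) (i : ℕ) : part l i ≤ l.sum := by
  unfold part
  rcases lt_or_ge i l.length with h | h
  · rw [List.getD_eq_getElem _ _ h]
    exact List.le_sum_of_mem (List.getElem_mem h)
  · rw [List.getD_eq_default _ _ h]; exact Nat.zero_le _

lemma part_pos_lt_length {l : List ℕ} {i : ℕ} (h : 0 < part l i) : i < l.length := by
  by_contra hc
  rw [part, List.getD_eq_default _ _ (le_of_not_gt hc)] at h
  exact absurd h (lt_irrefl 0)

lemma part_mem {l : List ℕ} {i : ℕ} (h : i < l.length) : part l i ∈ l := by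
  rw [part, List.getD_eq_getElem _ _ h]
  exact List.getElem_mem h

lemma part_pos_of_partition {l : List ℕ} (hl : IsPartition l) {i : ℕ}
    (h : i < l.length) : 0 < part l i :=
  hl.2 _ (part_mem h)

lemma inSkew_bounds {nu lam : List ℕ} {i j : ℕ} (h : InSkew nu lam i j) :
    i < nu.length ∧ j < nu.sum := by
  obtain ⟨-, h2⟩ := h
  have hpos : 0 < part nu i := lt_of_le_of_lt (Nat.zero_le _) h2
  exact ⟨part_pos_lt_length hpos, lt_of_lt_of_le h2 (part_le_sum nu i)⟩

lemma level_subset {nu lam mu : List ℕ} {T : ℕ → ℕ → ℕ}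
    (hT : IsLRTableau nu lam mu T) (k : ℕ) :
    {p : ℕ × ℕ | T p.1 p.2 = k + 1} ⊆
      ↑(Finset.range nu.length ×ˢ Finset.range nu.sum) := by
  intro p hp
  have hpos : 0 < T p.1 p.2 := by rw [hp]; exact Nat.succ_pos _
  have := inSkew_bounds ((hT.support p.1 p.2).mp hpos)
  simp [Finset.mem_product, this.1, this.2]

lemma level_finite {nu lam mu : List ℕ} {T : ℕ → ℕ → ℕ}
    (hT : IsLRTableau nu lam mu T) (k : ℕ) :
    {p : ℕ × ℕ | T p.1 p.2 = k + 1}.Finite :=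
  Set.Finite.subset (Finset.finite_toSet _) (level_subset hT k)

lemma entry_le {nu lam mu : List ℕ} {T : ℕ → ℕ → ℕ}
    (hT : IsLRTableau nu lam mu T) (i j : ℕ) : T i j ≤ mu.length := by
  rcases Nat.eq_zero_or_pos (T i j) with h | h
  · rw [h]; exact Nat.zero_le _
  · obtain ⟨m, hm⟩ : ∃ m, T i j = m + 1 := ⟨T i j - 1, by omega⟩
    have hne : {p : ℕ × ℕ | T p.1 p.2 = m + 1}.Nonempty := ⟨(i, j), hm⟩
    have hpos : 0 < part mu m := by
      rw [← hT.content m]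
      exact (Set.ncard_pos (level_finite hT m)).mpr hne
    have := part_pos_lt_length hpos
    omega

lemma lrSet_finite (nu lam mu : List ℕ) :
    {T : ℕ → ℕ → ℕ | IsLRTableau nu lam mu T}.Finite := by
  set L := nu.length with hL
  set M := nu.sum with hM
  set K := mu.length with hK
  have hinj : Set.InjOn (fun (T : ℕ → ℕ → ℕ) (p : Fin L × Fin M) =>
      (⟨min (T p.1.val p.2.val) K, Nat.lt_succ_of_le (min_le_right _ _)⟩ : Fin (K + 1)))
      {T : ℕ → ℕ → ℕ | IsLRTableau nu lam mu T} := by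
    intro T hT T' hT' heq
    simp only [Set.mem_setOf_eq] at hT hT'
    funext i j
    by_cases h : i < L ∧ j < M
    · have hmin : min (T i j) K = min (T' i j) K := by
        simpa using congrArg Fin.val (congrFun heq (⟨i, h.1⟩, ⟨j, h.2⟩))
      have h1 := entry_le hT i j
      have h2 := entry_le hT' i j
      omega
    · have hz : ∀ S : ℕ → ℕ → ℕ, IsLRTableau nu lam mu S → S i j = 0 := by
        intro S hS
        by_contra hc
        have hpos : 0 < S i j := Nat.pos_of_ne_zero hc
        have := inSkew_bounds ((hS.support i j).mp hpos)
        exact h this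
      rw [hz T hT, hz T' hT']
  exact Set.Finite.of_finite_image (Set.toFinite _) hinj

lemma lam_bounds {nu lam mu : List ℕ} {T : ℕ → ℕ → ℕ}
    (hT : IsLRTableau nu lam mu T) (hlam : IsPartition lam) :
    lam.length ≤ nu.length ∧ ∀ x ∈ lam, x ≤ nu.sum := by
  constructor
  · rcases Nat.eq_zero_or_pos lam.length with h | h
    · omega
    · have hk : lam.length - 1 < lam.length := by omega
      have h1 : 0 < part lam (lam.length - 1) := part_pos_of_partition hlam hk
      have h2 : 0 < part nu (lam.length - 1) := lt_of_lt_of_le h1 (hT.subset _)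
      have := part_pos_lt_length h2
      omega
  · intro x hx
    obtain ⟨k, hk, rfl⟩ := List.mem_iff_getElem.mp hx
    have : lam[k] = part lam k := by rw [part, List.getD_eq_getElem _ _ hk]
    rw [this]
    exact le_trans (hT.subset k) (part_le_sum nu k)

lemma mu_bounds {nu lam mu : List ℕ} {T : ℕ → ℕ → ℕ}
    (hT : IsLRTableau nu lam mu T) (hmu : IsPartition mu) :
    mu.length ≤ nu.length * nu.sum ∧ ∀ x ∈ mu, x ≤ nu.length * nu.sum := by
  classical
  have hcard : ∀ k : ℕ, {p : ℕ × ℕ | T p.1 p.2 = k + 1}.ncard ≤ nu.length * nu.sum := by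
    intro k
    have := Set.ncard_le_ncard (level_subset hT k) (Finset.finite_toSet _)
    rwa [Set.ncard_coe_finset, Finset.card_product, Finset.card_range,
      Finset.card_range] at this
  constructor
  · set f : ℕ → ℕ × ℕ := fun k =>
      if h : ∃ p : ℕ × ℕ, T p.1 p.2 = k + 1 then h.choose else (0, 0) with hf
    have hfk : ∀ k < mu.length, T (f k).1 (f k).2 = k + 1 := by
      intro k hk
      have hpos : 0 < part mu k := part_pos_of_partition hmu hk
      have hne : {p : ℕ × ℕ | T p.1 p.2 = k + 1}.Nonempty := by
        apply Set.nonempty_of_ncard_ne_zero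
        rw [hT.content k]; omega
      obtain ⟨p, hp⟩ := hne
      have hex : ∃ p : ℕ × ℕ, T p.1 p.2 = k + 1 := ⟨p, hp⟩
      rw [hf]
      simp only [dif_pos hex]
      exact hex.choose_spec
    have := Finset.card_le_card_of_injOn f
      (s := Finset.range mu.length)
      (t := Finset.range nu.length ×ˢ Finset.range nu.sum)
      (by
        intro k hk
        rw [Finset.mem_coe, Finset.mem_range] at hk
        have h1 := hfk k hk
        have hpos : 0 < T (f k).1 (f k).2 := by rw [h1]; exact Nat.succ_pos _
        have := inSkew_bounds ((hT.support _ _).mp hpos)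
        simp [Finset.mem_product, this.1, this.2])
      (by
        intro a ha b hb hab
        simp only [Finset.coe_range, Set.mem_Iio] at ha hb
        have h1 := hfk a ha
        have h2 := hfk b hb
        rw [hab] at h1
        omega)
    rwa [Finset.card_range, Finset.card_product, Finset.card_range,
      Finset.card_range] at this
  · intro x hx
    obtain ⟨k, hk, rfl⟩ := List.mem_iff_getElem.mp hx
    have hpart : mu[k] = part mu k := by rw [part, List.getD_eq_getElem _ _ hk]
    rw [hpart, ← hT.content k]
    exact hcard k

lemma finite_bounded_lists (N : ℕ) :
    {l : List ℕ | l.length ≤ N ∧ ∀ x ∈ l, x ≤ N}.Finite := by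
  have hfin : {l : List (Fin (N + 1)) | l.length ≤ N}.Finite :=
    List.finite_length_le _ N
  apply Set.Finite.subset (hfin.image (List.map Fin.val))
  rintro l ⟨hlen, hval⟩
  refine ⟨l.pmap (fun x h => (⟨x, h⟩ : Fin (N + 1)))
    (fun x hx => Nat.lt_succ_of_le (hval x hx)), by simpa, ?_⟩
  rw [List.map_pmap]
  simp

lemma part_map_half (lam : List ℕ) (i : ℕ) :
    part (lam.map (· / 2)) i = part lam i / 2 := by
  unfold part
  rcases lt_or_ge i lam.length with h | h
  · rw [List.getD_eq_getElem _ _ (by simpa using h), List.getD_eq_getElem _ _ h,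
      List.getElem_map]
  · rw [List.getD_eq_default _ _ (by simpa using h), List.getD_eq_default _ _ h]

lemma part_anti {lam : List ℕ} (hlam : IsPartition lam) {k k' : ℕ} (h : k ≤ k') :
    part lam k' ≤ part lam k := by
  rcases lt_or_ge k' lam.length with h2 | h2
  · rcases eq_or_lt_of_le h with rfl | hlt
    · exact le_refl _
    · have hk : k < lam.length := lt_trans hlt h2
      rw [part, part, List.getD_eq_getElem _ _ h2, List.getD_eq_getElem _ _ hk]
      exact List.pairwise_iff_getElem.mp hlam.1 k k' hk h2 hlt
  · rw [part, List.getD_eq_default _ _ h2]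
    exact Nat.zero_le _

lemma part_even {lam : List ℕ} (heven : ∀ x ∈ lam, Even x) (k : ℕ) :
    Even (part lam k) := by
  rcases lt_or_ge k lam.length with h | h
  · exact heven _ (part_mem h)
  · rw [part, List.getD_eq_default _ _ h]; exact Even.zero

section Witness

variable (lam : List ℕ)

noncomputable def halfT : ℕ → ℕ → ℕ := fun i j =>
  if part (lam.map (· / 2)) i ≤ j ∧ j < part lam i then i + 1 else 0

lemma halfT_level (k : ℕ) :
    {p : ℕ × ℕ | halfT lam p.1 p.2 = k + 1} =
      ↑((Finset.Ico (part (lam.map (· / 2)) k) (part lam k)).image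
        (fun j => ((k, j) : ℕ × ℕ))) := by
  ext ⟨i, j⟩
  simp only [Set.mem_setOf_eq, Finset.coe_image, Set.mem_image, Finset.mem_coe,
    Finset.mem_Ico, halfT]
  constructor
  · intro h
    by_cases hc : part (lam.map (· / 2)) i ≤ j ∧ j < part lam i
    · rw [if_pos hc] at h
      have : i = k := by omega
      subst this
      exact ⟨j, hc, rfl⟩
    · rw [if_neg hc] at h; omega
  · rintro ⟨j', hj', heq⟩
    have h1 : i = k := (Prod.mk.injEq _ _ _ _ ▸ heq).1.symm ▸ rfl
    obtain ⟨rfl, rfl⟩ : k = i ∧ j' = j := by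
      constructor <;> [exact (Prod.ext_iff.mp heq).1; exact (Prod.ext_iff.mp heq).2]
    rw [if_pos hj']

lemma halfT_level_ncard (heven : ∀ x ∈ lam, Even x) (k : ℕ) :
    {p : ℕ × ℕ | halfT lam p.1 p.2 = k + 1}.ncard = part (lam.map (· / 2)) k := by
  rw [halfT_level, Set.ncard_coe_finset,
    Finset.card_image_of_injective _ (fun a b hab => (Prod.ext_iff.mp hab).2),
    Nat.card_Ico, part_map_half]
  obtain ⟨c, hc⟩ := part_even heven k
  omega

lemma halfT_isLR (hlam : IsPartition lam) (heven : ∀ x ∈ lam, Even x) :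
    IsLRTableau lam (lam.map (· / 2)) (lam.map (· / 2)) (halfT lam) := by
  constructor
  · intro i
    rw [part_map_half]
    exact Nat.div_le_self _ _
  · intro i j
    unfold halfT InSkew
    by_cases hc : part (lam.map (· / 2)) i ≤ j ∧ j < part lam i
    · rw [if_pos hc]; simpa using hc
    · rw [if_neg hc]; simpa using hc
  · intro i j j' h1 h2 _
    unfold InSkew at h1 h2
    unfold halfT
    rw [if_pos h1, if_pos h2]
  · intro i i' j h1 h2 hlt
    unfold InSkew at h1 h2
    unfold halfT
    rw [if_pos h1, if_pos h2]
    omega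
  · exact halfT_level_ncard lam heven
  · intro r c k
    rcases Nat.lt_or_ge k r with hr | hr
    · -- RHS is the full level set
      have hRHS : {p : ℕ × ℕ | halfT lam p.1 p.2 = k + 1 ∧ ReadingLE p.1 p.2 r c} =
          {p : ℕ × ℕ | halfT lam p.1 p.2 = k + 1} := by
        ext ⟨i, j⟩
        simp only [Set.mem_setOf_eq, and_iff_left_iff_imp]
        intro h
        have : i = k := by
          unfold halfT at h
          by_cases hc : part (lam.map (· / 2)) i ≤ j ∧ j < part lam i
          · rw [if_pos hc] at h; omega
          · rw [if_neg hc] at h; omega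
        exact Or.inl (this ▸ hr)
      rw [hRHS, halfT_level_ncard lam heven k]
      have hfin : {p : ℕ × ℕ | halfT lam p.1 p.2 = k + 2}.Finite := by
        rw [halfT_level]; exact Finset.finite_toSet _
      calc {p : ℕ × ℕ | halfT lam p.1 p.2 = k + 2 ∧ ReadingLE p.1 p.2 r c}.ncard
          ≤ {p : ℕ × ℕ | halfT lam p.1 p.2 = k + 2}.ncard :=
            Set.ncard_le_ncard (fun p hp => hp.1) hfin
        _ = part (lam.map (· / 2)) (k + 1) := halfT_level_ncard lam heven (k + 1)
        _ ≤ part (lam.map (· / 2)) k := by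
            rw [part_map_half, part_map_half]
            exact Nat.div_le_div_right (part_anti hlam (Nat.le_succ k))
    · -- LHS is empty
      have hLHS : {p : ℕ × ℕ | halfT lam p.1 p.2 = k + 2 ∧ ReadingLE p.1 p.2 r c} = ∅ := by
        ext ⟨i, j⟩
        simp only [Set.mem_setOf_eq, Set.mem_empty_iff_false, iff_false, not_and]
        intro h
        have : i = k + 1 := by
          unfold halfT at h
          by_cases hc : part (lam.map (· / 2)) i ≤ j ∧ j < part lam i
          · rw [if_pos hc] at h; omega
          · rw [if_neg hc] at h; omega
        subst this
        rintro (h2 | ⟨h2, -⟩) <;> omega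
      rw [hLHS, Set.ncard_empty]
      exact Nat.zero_le _

end Witness

/-- The Newell–Littlewood coefficient
`N^ν_{λμ} = Σ_{α,β,γ} c^λ_{αβ} · c^μ_{αγ} · c^ν_{βγ}`, the sum running over
all triples of partitions `(α, β, γ)` (only finitely many terms are
nonzero). -/
noncomputable def nlCoeff (lam mu nu : List ℕ) : ℕ :=
  ∑ᶠ x : {l : List ℕ // IsPartition l} × {l : List ℕ // IsPartition l} ×
      {l : List ℕ // IsPartition l},
    lrCoeff lam x.1.val x.2.1.val * lrCoeff mu x.1.val x.2.2.val *
      lrCoeff nu x.2.1.val x.2.2.val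

lemma half_isPartition {lam : List ℕ} (hlam : IsPartition lam)
    (heven : ∀ x ∈ lam, Even x) : IsPartition (lam.map (· / 2)) := by
  constructor
  · exact List.Pairwise.map _ (fun a b hab => Nat.div_le_div_right hab) hlam.1
  · intro x hx
    obtain ⟨y, hy, rfl⟩ := List.mem_map.mp hx
    obtain ⟨c, hc⟩ := heven y hy
    have := hlam.2 y hy
    omega

lemma lrCoeff_ne_zero_bounds {nu a b : List ℕ} (ha : IsPartition a)
    (hb : IsPartition b) (h : lrCoeff nu a b ≠ 0) :
    (a.length ≤ nu.length ∧ ∀ x ∈ a, x ≤ nu.sum) ∧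
      (b.length ≤ nu.length * nu.sum ∧ ∀ x ∈ b, x ≤ nu.length * nu.sum) := by
  obtain ⟨T, hT⟩ := Set.nonempty_of_ncard_ne_zero h
  exact ⟨lam_bounds hT ha, mu_bounds hT hb⟩


/-- If all parts of `λ` are even then `N^λ_{λλ} ≥ 1`; equivalently, `⊗³`
detects `𝕊_{∥λ∥}(G)` in this case. -/
theorem one_le_nlCoeff_of_even_parts (lam : List ℕ)
    (hlam : IsPartition lam) (heven : ∀ x ∈ lam, Even x) :
    1 ≤ nlCoeff lam lam lam := by
  classical
  set μ : List ℕ := lam.map (· / 2) with hμ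
  have hμp : IsPartition μ := half_isPartition hlam heven
  set F : {l : List ℕ // IsPartition l} × {l : List ℕ // IsPartition l} ×
      {l : List ℕ // IsPartition l} → ℕ := fun x =>
    lrCoeff lam x.1.val x.2.1.val * lrCoeff lam x.1.val x.2.2.val *
      lrCoeff lam x.2.1.val x.2.2.val with hF
  -- support finiteness
  set N : ℕ := lam.length * lam.sum + lam.length + lam.sum with hN
  set S : Set (List ℕ) := {l : List ℕ | l.length ≤ N ∧ ∀ x ∈ l, x ≤ N} with hS
  have hSfin : S.Finite := finite_bounded_lists N
  have hkey : ∀ x ∈ Function.support F,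
      x.1.val ∈ S ∧ x.2.1.val ∈ S ∧ x.2.2.val ∈ S := by
    intro x hx
    rw [Function.mem_support, hF] at hx
    have h1 : lrCoeff lam x.1.val x.2.1.val ≠ 0 := by
      intro h; apply hx; simp only []; rw [h]; ring
    have h2 : lrCoeff lam x.2.1.val x.2.2.val ≠ 0 := by
      intro h; apply hx; simp only []; rw [h]; ring
    obtain ⟨⟨ha1, ha2⟩, ⟨hb1, hb2⟩⟩ := lrCoeff_ne_zero_bounds x.1.2 x.2.1.2 h1
    obtain ⟨-, ⟨hc1, hc2⟩⟩ := lrCoeff_ne_zero_bounds x.2.1.2 x.2.2.2 h2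
    refine ⟨⟨by omega, fun y hy => by have := ha2 y hy; omega⟩,
      ⟨by omega, fun y hy => by have := hb2 y hy; omega⟩,
      ⟨by omega, fun y hy => by have := hc2 y hy; omega⟩⟩
  have hsupp : (Function.support F).Finite := by
    have himg : ((fun x : {l : List ℕ // IsPartition l} × {l : List ℕ // IsPartition l} ×
        {l : List ℕ // IsPartition l} => (x.1.val, x.2.1.val, x.2.2.val)) ''
        Function.support F).Finite := by
      apply Set.Finite.subset (hSfin.prod (hSfin.prod hSfin))
      rintro ⟨a, b, c⟩ ⟨x, hx, heq⟩
      obtain ⟨e1, e2, e3⟩ := Prod.mk.injEq _ _ _ _ ▸ heq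
      obtain ⟨k1, k2, k3⟩ := hkey x hx
      refine ⟨?_, ?_, ?_⟩ <;> simp_all
    apply Set.Finite.of_finite_image himg
    intro x _ y _ h
    obtain ⟨e1, e23⟩ := Prod.ext_iff.mp h
    obtain ⟨e2, e3⟩ := Prod.ext_iff.mp e23
    exact Prod.ext (Subtype.ext e1) (Prod.ext (Subtype.ext e2) (Subtype.ext e3))
  -- the witness
  have hw : 1 ≤ lrCoeff lam μ μ := by
    have hne : {T : ℕ → ℕ → ℕ | IsLRTableau lam μ μ T}.Nonempty :=
      ⟨halfT lam, halfT_isLR lam hlam heven⟩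
    exact (Set.ncard_pos (lrSet_finite lam μ μ)).mpr hne
  have hx0 : 1 ≤ F (⟨μ, hμp⟩, ⟨μ, hμp⟩, ⟨μ, hμp⟩) := by
    rw [hF]
    exact Nat.one_le_iff_ne_zero.mpr (by positivity)
  have := single_le_finsum (⟨μ, hμp⟩, ⟨μ, hμp⟩, ⟨μ, hμp⟩) hsupp
    (fun j => Nat.zero_le (F j))
  calc (1 : ℕ) ≤ F (⟨μ, hμp⟩, ⟨μ, hμp⟩, ⟨μ, hμp⟩) := hx0
    _ ≤ ∑ᶠ x, F x := this
    _ = nlCoeff lam lam lam := rfl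
end

section
/- Let k ≥ 1 and let λ = (λ_1, λ_2, …, λ_{2k}) be a partition with exactly 2k parts, all parts odd and pairwise distinct (so λ_1 > λ_2 > ⋯ > λ_{2k} > 0). Define α = ((λ_1+1)/2, …, (λ_k+1)/2, (λ_{k+1}−1)/2, …, (λ_{2k}−1)/2) and β = ((λ_1−1)/2, …, (λ_k−1)/2, (λ_{k+1}+1)/2, …, (λ_{2k}+1)/2). Then the Littlewood–Richardson coefficient c^λ_{βα} (counting Littlewood–Richardson tableaux of shape λ/β and content α) is at least 1. -/
/-- The partition `α = ((λ₁+1)/2, …, (λ_k+1)/2, (λ_{k+1}−1)/2, …, (λ_{2k}−1)/2)`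
associated to a partition `λ` with `2k` parts. -/
def distAlpha (k : ℕ) (lam : List ℕ) : List ℕ :=
  (List.range (2 * k)).map fun i =>
    if i < k then (part lam i + 1) / 2 else (part lam i - 1) / 2

/-- The partition `β = ((λ₁−1)/2, …, (λ_k−1)/2, (λ_{k+1}+1)/2, …, (λ_{2k}+1)/2)`
associated to a partition `λ` with `2k` parts. -/
def distBeta (k : ℕ) (lam : List ℕ) : List ℕ :=
  (List.range (2 * k)).map fun i =>
    if i < k then (part lam i - 1) / 2 else (part lam i + 1) / 2

lemma part_map_range (f : ℕ → ℕ) (n i : ℕ) :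
    part ((List.range n).map f) i = if i < n then f i else 0 := by
  by_cases h : i < n
  · rw [part, List.getD_eq_getElem _ _ (by simpa using h)]
    simp [h]
  · rw [part, List.getD_eq_getElem?_getD, List.getElem?_eq_none (by simpa using not_lt.mp h)]
    simp [h]


/-- For a partition `λ` with exactly `2k` parts, all odd and pairwise
distinct, one has `c^λ_{βα} ≥ 1` (tableaux of shape `λ/β` and content
`α`). -/
theorem one_le_lrCoeff_distBeta_distAlpha
    (k : ℕ) (hk : 1 ≤ k) (lam : List ℕ)
    (hlen : lam.length = 2 * k)
    (hsort : lam.Pairwise (· > ·))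
    (hodd : ∀ x ∈ lam, Odd x) :
    1 ≤ lrCoeff lam (distBeta k lam) (distAlpha k lam) := by
  -- abbreviations
  set L : ℕ → ℕ := part lam with hLdef
  set B : ℕ → ℕ := part (distBeta k lam) with hBdef
  set A : ℕ → ℕ := part (distAlpha k lam) with hAdef
  -- basic facts about L
  have hL_zero : ∀ i, 2 * k ≤ i → L i = 0 := by
    intro i hi
    rw [hLdef, part, List.getD_eq_getElem?_getD, List.getElem?_eq_none (by omega)]
    rfl
  have hL_odd : ∀ i, i < 2 * k → Odd (L i) := by
    intro i hi
    rw [hLdef, part, List.getD_eq_getElem _ _ (by omega)]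
    exact hodd _ (List.getElem_mem _)
  have hL_pos : ∀ i, i < 2 * k → 0 < L i := by
    intro i hi
    obtain ⟨t, ht⟩ := hL_odd i hi
    omega
  have hL_strict : ∀ i j, i < j → j < 2 * k → L j < L i := by
    intro i j hij hj
    have h := hsort.rel_get_of_lt (a := ⟨i, by omega⟩) (b := ⟨j, by omega⟩) (by simpa using hij)
    simp only [List.get_eq_getElem] at h
    rw [hLdef, part, part, List.getD_eq_getElem _ _ (by omega),
      List.getD_eq_getElem _ _ (by omega)]
    exact h
  have hL_le0 : ∀ i, i < 2 * k → L i ≤ L 0 := by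
    intro i hi
    rcases Nat.eq_zero_or_pos i with rfl | h
    · exact le_refl _
    · exact (hL_strict 0 i h hi).le
  -- formulas for B and A
  have hBf : ∀ i, B i = if i < 2 * k then
      (if i < k then (L i - 1) / 2 else (L i + 1) / 2) else 0 := by
    intro i
    rw [hBdef, distBeta, part_map_range]
  have hAf : ∀ i, A i = if i < 2 * k then
      (if i < k then (L i + 1) / 2 else (L i - 1) / 2) else 0 := by
    intro i
    rw [hAdef, distAlpha, part_map_range]
  -- key arithmetic facts
  have hBA : ∀ m, B m ≤ L m ∧ L m - B m = A m := by
    intro m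
    by_cases hm : m < 2 * k
    · obtain ⟨t, ht⟩ := hL_odd m hm
      rw [hBf, hAf]
      simp only [hm, if_true]
      split_ifs <;> omega
    · rw [hBf, hAf, hL_zero m (by omega)]
      simp [hm]
  have hA_mono : ∀ m, A (m + 1) ≤ A m := by
    intro m
    by_cases hm1 : m + 1 < 2 * k
    · have hm : m < 2 * k := by omega
      obtain ⟨t, ht⟩ := hL_odd m hm
      obtain ⟨s, hs⟩ := hL_odd (m + 1) hm1
      have hlt := hL_strict m (m + 1) (by omega) hm1
      rw [hAf, hAf]
      simp only [hm, hm1, if_true]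
      split_ifs <;> omega
    · rw [hAf (m + 1)]
      simp [hm1]
  -- the tableau
  set T0 : ℕ → ℕ → ℕ := fun i j => if B i ≤ j ∧ j < L i then i + 1 else 0 with hT0def
  have hT0_eq : ∀ v i j, T0 i j = v + 1 ↔ (i = v ∧ B v ≤ j ∧ j < L v) := by
    intro v i j
    show (if B i ≤ j ∧ j < L i then i + 1 else 0) = v + 1 ↔ _
    by_cases h : B i ≤ j ∧ j < L i
    · rw [if_pos h]
      constructor
      · intro hh
        obtain rfl : i = v := by omega
        exact ⟨rfl, h⟩
      · rintro ⟨rfl, _⟩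
        rfl
    · rw [if_neg h]
      constructor
      · intro hh
        omega
      · rintro ⟨rfl, hh⟩
        exact absurd hh h
  -- the content sets
  have hset : ∀ v, {p : ℕ × ℕ | T0 p.1 p.2 = v + 1}
      = Prod.mk v '' Set.Ico (B v) (L v) := by
    intro v
    ext ⟨i, j⟩
    simp only [Set.mem_setOf_eq, hT0_eq, Set.mem_image, Set.mem_Ico]
    constructor
    · rintro ⟨rfl, h1, h2⟩
      exact ⟨j, ⟨h1, h2⟩, rfl⟩
    · rintro ⟨x, hx, heq⟩
      cases heq
      exact ⟨rfl, hx⟩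
  have hset_fin : ∀ v, {p : ℕ × ℕ | T0 p.1 p.2 = v + 1}.Finite := by
    intro v
    rw [hset]
    exact (Set.finite_Ico _ _).image _
  have hset_card : ∀ v, {p : ℕ × ℕ | T0 p.1 p.2 = v + 1}.ncard = L v - B v := by
    intro v
    rw [hset, Set.ncard_image_of_injective _ (Prod.mk_right_injective v),
      ← Finset.coe_Ico, Set.ncard_coe_finset, Nat.card_Ico]
  -- the skew diagram condition
  have hskew : ∀ i j, InSkew lam (distBeta k lam) i j ↔ (B i ≤ j ∧ j < L i) := by
    intro i j
    rw [InSkew, ← hLdef, ← hBdef]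
  -- T0 is an LR tableau
  have hLR : IsLRTableau lam (distBeta k lam) (distAlpha k lam) T0 := by
    constructor
    · intro i
      exact (hBA i).1
    · intro i j
      rw [hskew, hT0def]
      simp only
      split_ifs with h <;> simp [h]
    · intro i j j' h1 h2 _
      rw [hskew] at h1 h2
      show (if B i ≤ j ∧ j < L i then i + 1 else 0) ≤
        (if B i ≤ j' ∧ j' < L i then i + 1 else 0)
      rw [if_pos h1, if_pos h2]
    · intro i i' j h1 h2 hii
      rw [hskew] at h1 h2
      show (if B i ≤ j ∧ j < L i then i + 1 else 0) <
        (if B i' ≤ j ∧ j < L i' then i' + 1 else 0)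
      rw [if_pos h1, if_pos h2]
      omega
    · intro m
      rw [hset_card, (hBA m).2]
    · intro r c m
      -- lattice condition via an injection
      refine Set.ncard_le_ncard_of_injOn
        (fun p => (m, B m + (p.2 - B (m + 1)))) ?_ ?_ ?_
      · rintro ⟨i, j⟩ ⟨hT, hR⟩
        simp only [Set.mem_setOf_eq] at hT ⊢
        rw [show m + 2 = (m + 1) + 1 from rfl, hT0_eq] at hT
        obtain ⟨rfl, hj1, hj2⟩ := hT
        have hBA1 := hBA m
        have hBA2 := hBA (m + 1)
        have hmono := hA_mono m
        constructor
        · rw [hT0_eq]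
          exact ⟨rfl, by omega, by omega⟩
        · rcases hR with h | ⟨h, _⟩
          · exact Or.inl (by omega)
          · exact Or.inl (by omega)
      · rintro ⟨i, j⟩ ⟨hT, _⟩ ⟨i', j'⟩ ⟨hT', _⟩ heq
        simp only [Set.mem_setOf_eq] at hT hT'
        rw [show m + 2 = (m + 1) + 1 from rfl, hT0_eq] at hT hT'
        obtain ⟨rfl, hj1, hj2⟩ := hT
        obtain ⟨hi', hj1', hj2'⟩ := hT'
        have h2 : B m + (j - B (m + 1)) = B m + (j' - B (m + 1)) :=
          congrArg Prod.snd heq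
        have : j = j' := by omega
        simp [hi', this]
      · exact (hset_fin m).subset (fun p hp => hp.1)
  -- every tableau has entries bounded by 2*k
  have hskew_lt : ∀ i j, InSkew lam (distBeta k lam) i j → i < 2 * k ∧ j < L 0 := by
    intro i j hij
    rw [hskew] at hij
    have hi : i < 2 * k := by
      by_contra h
      rw [hL_zero i (by omega)] at hij
      omega
    exact ⟨hi, lt_of_lt_of_le hij.2 (hL_le0 i hi)⟩
  have hbound : ∀ T, IsLRTableau lam (distBeta k lam) (distAlpha k lam) T →
      ∀ i j, T i j ≤ 2 * k := by
    intro T hT i j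
    by_contra h
    push_neg at h
    set v := T i j - 1 with hv
    have hv2k : 2 * k ≤ v := by omega
    have hfin : {p : ℕ × ℕ | T p.1 p.2 = v + 1}.Finite := by
      apply Set.Finite.subset ((Set.finite_Iio (2 * k)).prod (Set.finite_Iio (L 0)))
      rintro ⟨a, b⟩ hab
      have hpos : 0 < T a b := by
        simp only [Set.mem_setOf_eq] at hab
        omega
      have := hskew_lt a b ((hT.support a b).mp hpos)
      simp only [Set.mem_prod, Set.mem_Iio]
      exact ⟨this.1, this.2⟩
    have hpos : 0 < {p : ℕ × ℕ | T p.1 p.2 = v + 1}.ncard := by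
      rw [Set.ncard_pos hfin]
      exact ⟨(i, j), by simp only [Set.mem_setOf_eq]; omega⟩
    rw [hT.content v, ← hAdef, hAf] at hpos
    simp only [show ¬ v < 2 * k by omega, if_false] at hpos
    omega
  -- finiteness of the set of tableaux
  have hfin : {T : ℕ → ℕ → ℕ |
      IsLRTableau lam (distBeta k lam) (distAlpha k lam) T}.Finite := by
    apply Set.Finite.of_finite_image (f := fun (T : ℕ → ℕ → ℕ) =>
      fun p : Fin (2 * k) × Fin (L 0) =>
        (⟨min (T p.1 p.2) (2 * k), by omega⟩ : Fin (2 * k + 1)))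
    · exact Set.toFinite _
    · intro T hT T' hT' heq
      simp only [Set.mem_setOf_eq] at hT hT'
      funext i j
      by_cases hij : InSkew lam (distBeta k lam) i j
      · obtain ⟨hi, hj⟩ := hskew_lt i j hij
        have hj' : j < L i := (hskew i j).mp hij |>.2
        have := congrFun heq (⟨i, hi⟩, ⟨j, hj⟩)
        simp only [Fin.mk.injEq] at this
        have b1 := hbound T hT i j
        have b2 := hbound T' hT' i j
        omega
      · have h1 : ¬ 0 < T i j := fun h => hij ((hT.support i j).mp h)
        have h2 : ¬ 0 < T' i j := fun h => hij ((hT'.support i j).mp h)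
        omega
  rw [lrCoeff]
  exact (Set.ncard_pos hfin).mpr ⟨T0, hLR⟩
end

section
/- Let a be an even positive integer and b an odd positive integer, let λ = (1+a, 1^b) be the hook partition with arm length a and leg length b, and define α = (1 + a/2, 1^{(b−1)/2}) and β = (a/2, 1^{(b+1)/2}). Then the Littlewood–Richardson coefficient c^λ_{αβ} (counting Littlewood–Richardson tableaux of shape λ/α and content β) is at least 1. -/
/-- The hook partition `(1 + a, 1^b)` with arm length `a` and leg length
`b`. -/
def hook (a b : ℕ) : List ℕ := (1 + a) :: List.replicate b 1

/- ---------------- auxiliary material ---------------- -/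

lemma part_cons_replicate (x n i : ℕ) :
    part (x :: List.replicate n 1) i = if i = 0 then x else if i ≤ n then 1 else 0 := by
  rcases i with _ | i
  · simp [part]
  · simp only [part, List.getD_eq_getElem?_getD, List.getElem?_cons_succ, List.getElem?_replicate]
    rcases Nat.lt_or_ge i n with hi | hi
    · simp only [if_pos hi]; rw [if_neg (by omega), if_pos (by omega)]; simp
    · simp only [if_neg (by omega : ¬ i < n)]; rw [if_neg (by omega), if_neg (by omega)]; simp

lemma part_hook (a b i : ℕ) :
    part (hook a b) i = if i = 0 then 1 + a else if i ≤ b then 1 else 0 :=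
  part_cons_replicate _ _ _

lemma inSkew_iff (h m i j : ℕ) :
    InSkew (hook (2*h) (2*m+1)) (hook h m) i j ↔
      (i = 0 ∧ 1 + h ≤ j ∧ j < 1 + 2*h) ∨ (j = 0 ∧ m + 1 ≤ i ∧ i ≤ 2*m + 1) := by
  unfold InSkew
  simp only [part_hook]
  split_ifs <;> omega

/-- The explicit LR tableau. -/
def T0 (h m i j : ℕ) : ℕ :=
  if i = 0 then (if 1 + h ≤ j ∧ j < 1 + 2*h then 1 else 0)
  else if j = 0 ∧ m + 1 ≤ i ∧ i ≤ 2*m + 1 then i - m + 1 else 0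

lemma T0_eq_one_iff (h m i j : ℕ) :
    T0 h m i j = 1 ↔ i = 0 ∧ 1 + h ≤ j ∧ j < 1 + 2*h := by
  unfold T0; split_ifs <;> (try simp_all) <;> omega

lemma T0_eq_iff (h m v i j : ℕ) (hv : 2 ≤ v) :
    T0 h m i j = v ↔ i = m + v - 1 ∧ j = 0 ∧ v ≤ m + 2 := by
  unfold T0; split_ifs <;> (try simp_all) <;> omega

lemma ncard_row_set (h : ℕ) :
    {p : ℕ × ℕ | p.1 = 0 ∧ 1 + h ≤ p.2 ∧ p.2 < 1 + 2*h}.ncard = h := by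
  have he : {p : ℕ × ℕ | p.1 = 0 ∧ 1 + h ≤ p.2 ∧ p.2 < 1 + 2*h}
      = ↑((Finset.Ico (1+h) (1+2*h)).image (fun j => ((0:ℕ), j))) := by
    ext ⟨i, j⟩
    simp only [Set.mem_setOf_eq, Finset.coe_image, Set.mem_image, Finset.mem_coe,
      Finset.mem_Ico, Prod.mk.injEq]
    constructor
    · rintro ⟨rfl, hj⟩; exact ⟨j, hj, rfl, rfl⟩
    · rintro ⟨x, hx, rfl, rfl⟩; exact ⟨rfl, hx⟩
  rw [he, Set.ncard_coe_finset,
    Finset.card_image_of_injective _ (fun x y hxy => by simpa using hxy), Nat.card_Ico]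
  omega

lemma isLR_T0 (h m : ℕ) (hh : 1 ≤ h) :
    IsLRTableau (hook (2*h) (2*m+1)) (hook h m) (h :: List.replicate (m+1) 1) (T0 h m) where
  subset := by intro i; simp only [part_hook]; split_ifs <;> omega
  support := by
    intro i j; rw [inSkew_iff]; unfold T0; split_ifs <;> (try simp_all) <;> omega
  row_weak := by
    intro i j j' hj hj' hle
    rw [inSkew_iff] at hj hj'
    unfold T0; split_ifs <;> (try simp_all) <;> omega
  col_strict := by
    intro i i' j h1 h2 hlt
    rw [inSkew_iff] at h1 h2
    unfold T0; split_ifs <;> (try simp_all) <;> omega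
  content := by
    intro k
    rcases k with _ | k
    · have hset : {p : ℕ × ℕ | T0 h m p.1 p.2 = 0 + 1}
          = {p : ℕ × ℕ | p.1 = 0 ∧ 1 + h ≤ p.2 ∧ p.2 < 1 + 2*h} := by
        ext ⟨i, j⟩
        simpa only [Set.mem_setOf_eq] using T0_eq_one_iff h m i j
      rw [hset, ncard_row_set, part_cons_replicate]; simp
    · rcases le_or_gt (k+1) (m+1) with hk | hk
      · have hset : {p : ℕ × ℕ | T0 h m p.1 p.2 = (k+1) + 1} = {(m+k+1, 0)} := by
          ext ⟨i, j⟩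
          simp only [Set.mem_setOf_eq, Set.mem_singleton_iff, Prod.mk.injEq,
            T0_eq_iff h m (k+2) i j (by omega)]
          omega
        rw [hset, Set.ncard_singleton, part_cons_replicate,
          if_neg (by omega), if_pos (by omega)]
      · have hset : {p : ℕ × ℕ | T0 h m p.1 p.2 = (k+1) + 1} = ∅ := by
          ext ⟨i, j⟩
          simp only [Set.mem_setOf_eq, Set.mem_empty_iff_false, iff_false,
            T0_eq_iff h m (k+2) i j (by omega)]
          omega
        rw [hset, Set.ncard_empty, part_cons_replicate,
          if_neg (by omega), if_neg (by omega)]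
  lattice := by
    intro r c k
    rcases k with _ | k
    · -- k = 0 : entries 2 vs 1
      rcases Set.eq_empty_or_nonempty
        {p : ℕ × ℕ | T0 h m p.1 p.2 = 0 + 2 ∧ ReadingLE p.1 p.2 r c} with hL | hL
      · rw [hL]; simp
      · obtain ⟨⟨i, j⟩, hij, hread⟩ := hL
        rw [T0_eq_iff h m (0+2) i j (by omega)] at hij
        obtain ⟨hi, hj, -⟩ := hij
        subst hi; subst hj
        have hr : 0 < r := by
          rcases hread with h1 | ⟨h2, h3⟩ <;> omega
        have hLsub : {p : ℕ × ℕ | T0 h m p.1 p.2 = 0 + 2 ∧ ReadingLE p.1 p.2 r c}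
            ⊆ {((m+1 : ℕ), (0 : ℕ))} := by
          rintro ⟨i', j'⟩ ⟨hv, -⟩
          rw [T0_eq_iff h m (0+2) i' j' (by omega)] at hv
          obtain ⟨h1, h2, -⟩ := hv
          simp only [Set.mem_singleton_iff, Prod.mk.injEq]
          exact ⟨by omega, by omega⟩
        have hRset : {p : ℕ × ℕ | T0 h m p.1 p.2 = 0 + 1 ∧ ReadingLE p.1 p.2 r c}
            = {p : ℕ × ℕ | p.1 = 0 ∧ 1 + h ≤ p.2 ∧ p.2 < 1 + 2*h} := by
          ext ⟨i', j'⟩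
          simp only [Set.mem_setOf_eq]
          constructor
          · rintro ⟨hv, -⟩
            rw [show (0:ℕ)+1 = 1 from rfl, T0_eq_one_iff] at hv
            exact hv
          · rintro ⟨h1, h2, h3⟩
            refine ⟨?_, Or.inl (by omega)⟩
            rw [show (0:ℕ)+1 = 1 from rfl, T0_eq_one_iff]
            exact ⟨h1, h2, h3⟩
        calc {p : ℕ × ℕ | T0 h m p.1 p.2 = 0 + 2 ∧ ReadingLE p.1 p.2 r c}.ncard
            ≤ ({((m+1 : ℕ), (0 : ℕ))} : Set (ℕ × ℕ)).ncard :=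
              Set.ncard_le_ncard hLsub (Set.finite_singleton _)
          _ = 1 := Set.ncard_singleton _
          _ ≤ h := hh
          _ = {p : ℕ × ℕ | T0 h m p.1 p.2 = 0 + 1 ∧ ReadingLE p.1 p.2 r c}.ncard := by
              rw [hRset, ncard_row_set]
    · -- k ≥ 1 : entries k+3 vs k+2
      rcases Set.eq_empty_or_nonempty
        {p : ℕ × ℕ | T0 h m p.1 p.2 = (k+1) + 2 ∧ ReadingLE p.1 p.2 r c} with hL | hL
      · rw [hL]; simp
      · obtain ⟨⟨i, j⟩, hij, hread⟩ := hL
        rw [T0_eq_iff h m (k+3) i j (by omega)] at hij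
        obtain ⟨hi, hj, hkm⟩ := hij
        subst hi; subst hj
        have hr : m + k + 1 < r := by
          rcases hread with h1 | ⟨h2, h3⟩ <;> omega
        have hLsub : {p : ℕ × ℕ | T0 h m p.1 p.2 = (k+1) + 2 ∧ ReadingLE p.1 p.2 r c}
            ⊆ {((m+k+2 : ℕ), (0 : ℕ))} := by
          rintro ⟨i', j'⟩ ⟨hv, -⟩
          rw [T0_eq_iff h m (k+3) i' j' (by omega)] at hv
          obtain ⟨h1, h2, -⟩ := hv
          simp only [Set.mem_singleton_iff, Prod.mk.injEq]
          exact ⟨by omega, by omega⟩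
        have hRset : {p : ℕ × ℕ | T0 h m p.1 p.2 = (k+1) + 1 ∧ ReadingLE p.1 p.2 r c}
            = {((m+k+1 : ℕ), (0 : ℕ))} := by
          ext ⟨i', j'⟩
          simp only [Set.mem_setOf_eq, Set.mem_singleton_iff, Prod.mk.injEq]
          constructor
          · rintro ⟨hv, -⟩
            rw [T0_eq_iff h m (k+2) i' j' (by omega)] at hv
            exact ⟨by omega, by omega⟩
          · rintro ⟨rfl, rfl⟩
            refine ⟨?_, Or.inl (by omega)⟩
            rw [T0_eq_iff h m (k+2) _ _ (by omega)]
            exact ⟨by omega, rfl, by omega⟩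
        calc {p : ℕ × ℕ | T0 h m p.1 p.2 = (k+1) + 2 ∧ ReadingLE p.1 p.2 r c}.ncard
            ≤ ({((m+k+2 : ℕ), (0 : ℕ))} : Set (ℕ × ℕ)).ncard :=
              Set.ncard_le_ncard hLsub (Set.finite_singleton _)
          _ = 1 := Set.ncard_singleton _
          _ = {p : ℕ × ℕ | T0 h m p.1 p.2 = (k+1) + 1 ∧ ReadingLE p.1 p.2 r c}.ncard := by
              rw [hRset, Set.ncard_singleton]

lemma T0_value_zero {h m : ℕ} {T : ℕ → ℕ → ℕ}
    (hT : IsLRTableau (hook (2*h) (2*m+1)) (hook h m) (h :: List.replicate (m+1) 1) T)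
    (i j : ℕ) (hij : 2*m + 2 ≤ i ∨ 2*h + 1 ≤ j) : T i j = 0 := by
  by_contra hne
  have hpos : 0 < T i j := Nat.pos_of_ne_zero hne
  have := (hT.support i j).mp hpos
  rw [inSkew_iff] at this
  omega

lemma skew_finite (h m : ℕ) :
    {p : ℕ × ℕ | InSkew (hook (2*h) (2*m+1)) (hook h m) p.1 p.2}.Finite := by
  apply Set.Finite.subset
    ((Finset.range (2*m+2) ×ˢ Finset.range (2*h+1) : Finset (ℕ × ℕ)).finite_toSet)
  rintro ⟨i, j⟩ hp
  rw [Set.mem_setOf_eq, inSkew_iff] at hp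
  simp only [Finset.coe_product, Set.mem_prod, Finset.mem_coe, Finset.mem_range]
  omega

lemma T0_value_lt {h m : ℕ} {T : ℕ → ℕ → ℕ}
    (hT : IsLRTableau (hook (2*h) (2*m+1)) (hook h m) (h :: List.replicate (m+1) 1) T)
    (i j : ℕ) : T i j < m + 3 := by
  by_contra hge
  push_neg at hge
  set k : ℕ := T i j - 1 with hk
  have hk2 : m + 2 ≤ k := by omega
  have hsub : {p : ℕ × ℕ | T p.1 p.2 = k + 1}
      ⊆ {p : ℕ × ℕ | InSkew (hook (2*h) (2*m+1)) (hook h m) p.1 p.2} := by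
    rintro ⟨i', j'⟩ hv
    have hv' : T i' j' = k + 1 := hv
    exact (hT.support i' j').mp (by omega)
  have hfin := (skew_finite h m).subset hsub
  have hc := hT.content k
  rw [part_cons_replicate, if_neg (by omega), if_neg (by omega)] at hc
  have hemp := (Set.ncard_eq_zero hfin).mp hc
  have hv : T i j = k + 1 := by omega
  have hmem : (i, j) ∈ {p : ℕ × ℕ | T p.1 p.2 = k + 1} := hv
  rw [hemp] at hmem
  exact hmem

lemma LR_set_finite (h m : ℕ) :
    {T : ℕ → ℕ → ℕ |
      IsLRTableau (hook (2*h) (2*m+1)) (hook h m) (h :: List.replicate (m+1) 1) T}.Finite := by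
  rw [← Set.finite_coe_iff]
  apply Finite.of_injective
    (fun T : {T : ℕ → ℕ → ℕ |
        IsLRTableau (hook (2*h) (2*m+1)) (hook h m) (h :: List.replicate (m+1) 1) T} =>
      fun p : Fin (2*m+2) × Fin (2*h+1) =>
        (⟨T.1 p.1 p.2, T0_value_lt T.2 p.1 p.2⟩ : Fin (m + 3)))
  rintro ⟨T1, hT1⟩ ⟨T2, hT2⟩ heq
  apply Subtype.ext
  funext i j
  show T1 i j = T2 i j
  rcases Nat.lt_or_ge i (2*m+2) with hi | hi
  · rcases Nat.lt_or_ge j (2*h+1) with hj | hj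
    · have := congrFun heq (⟨i, hi⟩, ⟨j, hj⟩)
      simpa [Fin.ext_iff] using this
    · rw [T0_value_zero hT1 i j (Or.inr hj), T0_value_zero hT2 i j (Or.inr hj)]
  · rw [T0_value_zero hT1 i j (Or.inl hi), T0_value_zero hT2 i j (Or.inl hi)]

lemma main_aux (h m : ℕ) (hh : 1 ≤ h) :
    1 ≤ lrCoeff (hook (2*h) (2*m+1)) (hook h m) (h :: List.replicate (m+1) 1) := by
  unfold lrCoeff
  exact (Set.ncard_pos (LR_set_finite h m)).mpr ⟨T0 h m, isLR_T0 h m hh⟩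


/-- For the hook `λ = (1+a, 1^b)` with `a` even positive and `b` odd, with
`α = (1 + a/2, 1^{(b−1)/2})` and `β = (a/2, 1^{(b+1)/2})`, one has
`c^λ_{αβ} ≥ 1`. -/
theorem one_le_lrCoeff_hook_even_arm_alpha_beta (a b : ℕ)
    (ha : Even a) (ha' : 0 < a) (hb : Odd b) :
    1 ≤ lrCoeff (hook a b) (hook (a / 2) ((b - 1) / 2))
        (a / 2 :: List.replicate ((b + 1) / 2) 1) := by
  obtain ⟨h, rfl⟩ := ha
  obtain ⟨m, rfl⟩ := hb
  have h1 : (h + h) / 2 = h := by omega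
  have h2 : (2*m + 1 - 1) / 2 = m := by omega
  have h3 : (2*m + 1 + 1) / 2 = m + 1 := by omega
  rw [h1, h2, h3, show h + h = 2*h by ring]
  exact main_aux h m (by omega)
end
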